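/- With D(t) = C(t) − 1 where C(t) is the Catalan generating function, the identity ((1+D(t))/(1−D(t)))² = 1/(1−4t) holds as formal power series. -/

import Mathlib

open PowerSeries Finset

/-- Generating function of the Catalan numbers `C_n = (1/(n+1))·binom(2n,n)`. -/
noncomputable def catGF : PowerSeries ℚ :=
  PowerSeries.mk fun n => (Nat.choose (2 * n) n : ℚ) / (n + 1)

/-- `D(t) = C(t) - 1`. -/
noncomputable def DGF : PowerSeries ℚ := catGF - 1

/-- A lattice walk of length `n` with steps `±1`. -/
def IsWalk (n : ℕ) (L : Fin (n + 1) → ℤ) : Prop :=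
  ∀ k : Fin n, |L k.succ - L k.castSucc| = 1

/-- Two walks intersect (share a common point at the same time). -/
def Meets {m : ℕ} (L L' : Fin m → ℤ) : Prop := ∃ k, L k = L' k

/-- All triples of walks of length `n` starting at heights `0, 2i, 2i+2j`. -/
def USet (i j n : ℕ) :
    Set ((Fin (n + 1) → ℤ) × (Fin (n + 1) → ℤ) × (Fin (n + 1) → ℤ)) :=
  {T | IsWalk n T.1 ∧ IsWalk n T.2.1 ∧ IsWalk n T.2.2 ∧
    T.1 0 = 0 ∧ T.2.1 0 = 2 * i ∧ T.2.2 0 = 2 * i + 2 * j}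

/-- Triples where `L₁` and `L₂` are nonintersecting. -/
def W12Set (i j n : ℕ) := {T ∈ USet i j n | ¬ Meets T.1 T.2.1}

/-- Triples where `L₂` and `L₃` are nonintersecting. -/
def W23Set (i j n : ℕ) := {T ∈ USet i j n | ¬ Meets T.2.1 T.2.2}

/-- Triples where `L₁` intersects `L₃`. -/
def M13Set (i j n : ℕ) := {T ∈ USet i j n | Meets T.1 T.2.2}

/-- Triples where `L₂` intersects both `L₁` and `L₃`. -/
def M1223Set (i j n : ℕ) :=
  {T ∈ USet i j n | Meets T.2.1 T.1 ∧ Meets T.2.1 T.2.2}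

/-- Vicious (pairwise nonintersecting) triples. -/
def VSet (i j n : ℕ) :=
  {T ∈ USet i j n | ¬ Meets T.1 T.2.1 ∧ ¬ Meets T.2.1 T.2.2 ∧ ¬ Meets T.1 T.2.2}

/-- Pairs of walks of length `n` starting at heights `0` and `2i`. -/
def PairSet (i n : ℕ) : Set ((Fin (n + 1) → ℤ) × (Fin (n + 1) → ℤ)) :=
  {P | IsWalk n P.1 ∧ IsWalk n P.2 ∧ P.1 0 = 0 ∧ P.2 0 = 2 * i}

/-- Intersecting pairs. -/
def MSet (i n : ℕ) := {P ∈ PairSet i n | Meets P.1 P.2}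

/-- Nonintersecting (vicious) pairs. -/
def NSet (i n : ℕ) := {P ∈ PairSet i n | ¬ Meets P.1 P.2}

/-- Converging pairs: never meet before time `n`, meet at time `n`. -/
def TSet (i n : ℕ) :=
  {P ∈ PairSet i n | (∀ k : Fin (n + 1), (k : ℕ) < n → P.1 k ≠ P.2 k) ∧
    P.1 (Fin.last n) = P.2 (Fin.last n)}

/-- 2-watermelons of length `n`. -/
def MelonSet (n : ℕ) : Set ((Fin (n + 1) → ℤ) × (Fin (n + 1) → ℤ)) :=
  {P | IsWalk n P.1 ∧ IsWalk n P.2 ∧ P.1 0 = 0 ∧ P.2 0 = 2 ∧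
    P.2 (Fin.last n) = P.1 (Fin.last n) + 2 ∧ ∀ k, P.1 k < P.2 k}

/-- Partial Dyck paths of length `2n` from height `2i` to `0`, strictly positive before the end. -/
def PDyckSet (i n : ℕ) : Set (Fin (2 * n + 1) → ℤ) :=
  {Q | IsWalk (2 * n) Q ∧ Q 0 = 2 * i ∧ Q (Fin.last (2 * n)) = 0 ∧
    ∀ k : Fin (2 * n + 1), (k : ℕ) < 2 * n → 0 < Q k}


lemma catGF_coeff (n : ℕ) : PowerSeries.coeff n catGF = (catalan n : ℚ) := by
  have h := succ_mul_catalan_eq_centralBinom n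
  have : ((n+1 : ℕ) : ℚ) * (catalan n : ℚ) = (n.centralBinom : ℚ) := by exact_mod_cast h
  rw [Nat.centralBinom] at this
  simp only [catGF, coeff_mk]
  field_simp
  push_cast at this ⊢
  linarith

lemma catGF_key : PowerSeries.X * catGF ^ 2 + 1 = catGF := by
  ext n
  cases n with
  | zero => simp [catGF]
  | succ n =>
    rw [sq, map_add, coeff_succ_X_mul, PowerSeries.coeff_mul]
    simp only [catGF_coeff, map_one, coeff_one, Nat.succ_ne_zero, if_false, add_zero]
    rw [catalan_succ' n]
    push_cast
    rfl

lemma cc_catGF : PowerSeries.constantCoeff catGF = 1 := by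
  have := catGF_coeff 0
  simpa [PowerSeries.coeff_zero_eq_constantCoeff] using this

theorem stmt2 : ((1 + DGF) * (1 - DGF)⁻¹) ^ 2 = (1 - 4 * PowerSeries.X)⁻¹ := by
  have h1D : (1 : PowerSeries ℚ) + DGF = catGF := by rw [DGF]; ring
  have h2 : (1 : PowerSeries ℚ) - DGF = 2 - catGF := by rw [DGF]; ring
  have hcc : PowerSeries.constantCoeff (1 - DGF) ≠ 0 := by
    rw [h2, map_sub, cc_catGF, show (2 : PowerSeries ℚ) = 1 + 1 by norm_num, map_add,
      constantCoeff_one]; norm_num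
  have hcc4 : PowerSeries.constantCoeff (1 - 4 * PowerSeries.X : PowerSeries ℚ) ≠ 0 := by simp
  rw [eq_inv_iff_mul_eq_one hcc4]
  have hx : PowerSeries.X * catGF ^ 2 = catGF - 1 := by linear_combination catGF_key
  have keyid : (1 + DGF) ^ 2 * (1 - 4 * PowerSeries.X) = (1 - DGF) ^ 2 := by
    rw [h1D, h2]
    linear_combination (-4 : PowerSeries ℚ) * hx
  calc ((1 + DGF) * (1 - DGF)⁻¹) ^ 2 * (1 - 4 * PowerSeries.X)
      = (1 + DGF) ^ 2 * (1 - 4 * PowerSeries.X) * ((1 - DGF)⁻¹) ^ 2 := by ring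
    _ = (1 - DGF) ^ 2 * ((1 - DGF)⁻¹) ^ 2 := by rw [keyid]
    _ = ((1 - DGF) * (1 - DGF)⁻¹) ^ 2 := by ring
    _ = 1 := by rw [PowerSeries.mul_inv_cancel _ hcc]; ring
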